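/- Let k ≥ 1 and let φ : Γ → M_k(ℂ) be positive definite, so that every determinant det φ_{(F)} (F ⊆ Γ finite) is a nonnegative real number. Then for every integer n ≥ 0: (i) ∏_{i=1}^{r} [ det φ_{(B_{n+1} ∩ s_iB_{n+1})} · det φ_{(B_{n+1} ∪ s_iB_{n+1})} ] ≤ ( det φ_{(B_{n+1})} )^{2r}; and (ii) det φ_{(B_{n+1})} · ( det φ_{(B_n)} )^{2r−1} ≤ ∏_{i=1}^{r} ( det φ_{(B_n ∪ s_iB_n)} )². (Writing H(F) := (1/2)·log det φ_{(F)} ∈ [−∞,∞), E_n := H(B_{n+1}) − Σ_{i=1}^{r} H(B_{n+1} ∩ s_iB_{n+1}), and E'_n := Σ_{i=1}^{r} H(B_n ∪ s_iB_n) − (2r−1)·H(B_n), these inequalities express E'_{n+1} ≤ E_n ≤ E'_n.) -/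

import Mathlib

open MeasureTheory Filter Matrix
open scoped ENNReal ComplexOrder

noncomputable section

namespace Annealed

abbrev FG (r : ℕ) := FreeGroup (Fin r)

def wlen {r : ℕ} (g : FG r) : ℕ := (FreeGroup.toWord g).length

theorem ball_finite (r n : ℕ) : {g : FG r | wlen g ≤ n}.Finite :=
  Set.Finite.preimage (FreeGroup.toWord_injective.injOn)
    (List.finite_length_le (Fin r × Bool) n)

def ballF (r n : ℕ) : Finset (FG r) := (ball_finite r n).toFinset

def phiMat {r k : ℕ} (φ : FG r → Matrix (Fin k) (Fin k) ℂ) (F : Finset (FG r)) :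
    Matrix (F × Fin k) (F × Fin k) ℂ :=
  Matrix.of fun p q => φ ((p.1 : FG r)⁻¹ * (q.1 : FG r)) p.2 q.2

def IsPosDefFn {r k : ℕ} (φ : FG r → Matrix (Fin k) (Fin k) ℂ) : Prop :=
  ∀ F : Finset (FG r), (phiMat φ F).PosSemidef

def ballInter (r m : ℕ) (i : Fin r) : Finset (FG r) :=
  ballF r m ∩ (ballF r m).image (fun x => FreeGroup.of i * x)

def ballUnion (r m : ℕ) (i : Fin r) : Finset (FG r) :=
  ballF r m ∪ (ballF r m).image (fun x => FreeGroup.of i * x)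

variable {ι κ : Type*} [Fintype ι] [DecidableEq ι] [Fintype κ] [DecidableEq κ]

lemma psd_det_real {M : Matrix ι ι ℂ} (hM : M.PosSemidef) :
    M.det = (M.det.re : ℂ) ∧ 0 ≤ M.det.re := by
  have h0 : (0 : ℂ) ≤ M.det := by
    rw [hM.1.det_eq_prod_eigenvalues]
    exact Finset.prod_nonneg fun i _ => by
      exact Complex.zero_le_real.mpr (hM.eigenvalues_nonneg i)
  obtain ⟨hre, him⟩ := Complex.nonneg_iff.mp h0
  exact ⟨Complex.ext rfl him.symm, hre⟩

lemma psd_det_re_nonneg {M : Matrix ι ι ℂ} (hM : M.PosSemidef) : 0 ≤ M.det.re :=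
  (psd_det_real hM).2

lemma det_one_add_psd {N : Matrix ι ι ℂ} (hN : N.PosSemidef) :
    1 ≤ (1 + N).det.re := by
  set U : Matrix ι ι ℂ := (hN.1.eigenvectorUnitary : Matrix ι ι ℂ) with hUdef
  have hU : U * star U = 1 := (Matrix.mem_unitaryGroup_iff).mp hN.1.eigenvectorUnitary.2
  have hU2 : star U * U = 1 := (Matrix.mem_unitaryGroup_iff').mp hN.1.eigenvectorUnitary.2
  have hsp : N = U * diagonal (RCLike.ofReal ∘ hN.1.eigenvalues) * star U := hN.1.spectral_theorem
  have key : 1 + N = U * (1 + diagonal (RCLike.ofReal ∘ hN.1.eigenvalues)) * star U := by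
    rw [mul_add, add_mul, mul_one, hU, ← hsp]
  rw [key]
  rw [det_mul, det_mul, mul_comm, ← mul_assoc, ← det_mul, hU2, det_one, one_mul]
  have : (1 : Matrix ι ι ℂ) + diagonal (RCLike.ofReal ∘ hN.1.eigenvalues)
      = diagonal (fun i => ((1 + hN.1.eigenvalues i : ℝ) : ℂ)) := by
    rw [← diagonal_one, diagonal_add]
    congr 1; funext i; push_cast; simp [RCLike.ofReal]
  rw [this, det_diagonal]
  have : (∏ i, ((1 + hN.1.eigenvalues i : ℝ) : ℂ)) = ((∏ i, (1 + hN.1.eigenvalues i) : ℝ) : ℂ) := by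
    push_cast; rfl
  rw [this, Complex.ofReal_re]
  have h1 : (1:ℝ) = ∏ _i : ι, (1:ℝ) := (Finset.prod_const_one).symm
  rw [h1]
  refine Finset.prod_le_prod (fun i _ => zero_le_one) ?_
  intro i _
  linarith [hN.eigenvalues_nonneg i]


lemma det_mono {Q R : Matrix ι ι ℂ} (hQ : Q.PosSemidef) (hR : R.PosSemidef) :
    Q.det.re ≤ (Q + R).det.re := by
  by_cases hz : Q.det = 0
  · rw [hz]; simpa using psd_det_re_nonneg (hQ.add hR)
  · obtain ⟨C, hC, hCC⟩ : ∃ C : Matrix ι ι ℂ, C.PosSemidef ∧ C * C = Q := by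
      open MatrixOrder in
      exact ⟨CFC.sqrt Q, (CFC.sqrt_nonneg Q).posSemidef, CFC.sqrt_mul_sqrt_self Q hQ.nonneg⟩
    have hdC : C.det ≠ 0 := by
      intro h
      apply hz
      rw [← hCC, det_mul, h, mul_zero]
    have hCinv : C * C⁻¹ = 1 := mul_nonsing_inv _ (Ne.isUnit hdC)
    have hCinv2 : C⁻¹ * C = 1 := nonsing_inv_mul _ (Ne.isUnit hdC)
    set N := C⁻¹ * R * C⁻¹ with hNdef
    have hN : N.PosSemidef := by
      have hherm : (C⁻¹)ᴴ = C⁻¹ := (hC.1.inv).eq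
      have h2 := hR.conjTranspose_mul_mul_same C⁻¹
      rwa [hherm] at h2
    have key : Q + R = C * (1 + N) * C := by
      rw [mul_add, add_mul, mul_one, hCC]
      congr 1
      refine (?_ : C * N * C = R).symm
      calc C * (C⁻¹ * R * C⁻¹) * C = (C * C⁻¹) * R * (C⁻¹ * C) := by
            simp only [Matrix.mul_assoc]
        _ = R := by rw [hCinv, hCinv2, Matrix.one_mul, Matrix.mul_one]
    have hdet : (Q + R).det = Q.det * (1 + N).det := by
      rw [key, det_mul, det_mul, ← hCC, det_mul]
      ring
    have hq := psd_det_real hQ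
    have h1N := psd_det_real ((Matrix.PosSemidef.one).add hN)
    have h1N' := det_one_add_psd hN
    have hone : ((1 : Matrix ι ι ℂ) + N).det.re ≥ 1 := h1N'
    rw [hdet, hq.1, h1N.1, ← Complex.ofReal_mul]
    simp only [Complex.ofReal_re]
    nlinarith [hq.2]

lemma sum_extend_mul {e : κ → ι} (he : Function.Injective e) (x : κ → ℂ) (h : ι → ℂ) :
    ∑ j, (Function.extend e x 0 j) * h j = ∑ k, x k * h (e k) := by
  classical
  rw [show (Finset.univ : Finset ι) = Finset.univ.image e ∪ (Finset.univ.image e)ᶜ from by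
    simp]
  rw [Finset.sum_union disjoint_compl_right]
  have h2 : ∑ j ∈ (Finset.univ.image e)ᶜ, (Function.extend e x 0 j) * h j = 0 := by
    refine Finset.sum_eq_zero fun j hj => ?_
    rw [Finset.mem_compl, Finset.mem_image] at hj
    rw [Function.extend_apply' _ _ _ (fun ⟨k, hk⟩ => hj ⟨k, Finset.mem_univ k, hk⟩)]
    simp
  rw [h2, add_zero, Finset.sum_image (fun a _ b _ hab => he hab)]
  refine Finset.sum_congr rfl fun k _ => ?_
  rw [he.extend_apply]

lemma posDef_submatrix_inj {M : Matrix ι ι ℂ} (hM : M.PosDef) {e : κ → ι}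
    (he : Function.Injective e) : (M.submatrix e e).PosDef := by
  refine Matrix.PosDef.of_dotProduct_mulVec_pos (hM.1.submatrix e) fun x hx => ?_
  classical
  set y : ι → ℂ := Function.extend e x 0 with hydef
  have hy : y ≠ 0 := by
    obtain ⟨k, hk⟩ := Function.ne_iff.mp hx
    refine Function.ne_iff.mpr ⟨e k, ?_⟩
    rw [hydef, he.extend_apply]
    simpa using hk
  have hsy : star y = Function.extend e (star x) 0 := by
    funext j
    by_cases hj : ∃ k, e k = j
    · obtain ⟨k, rfl⟩ := hj
      simp [hydef, he.extend_apply]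
    · simp [hydef, Function.extend_apply' _ _ _ hj]
  have hcalc : star y ⬝ᵥ M *ᵥ y = star x ⬝ᵥ (M.submatrix e e) *ᵥ x := by
    rw [dotProduct, hsy]
    rw [sum_extend_mul he (star x) (fun j => (M *ᵥ y) j)]
    refine Finset.sum_congr rfl fun k _ => ?_
    congr 1
    rw [mulVec, dotProduct]
    rw [show ∑ j, M (e k) j * y j = ∑ j, y j * M (e k) j from
      Finset.sum_congr rfl fun j _ => mul_comm _ _]
    rw [hydef, sum_extend_mul he x (fun j => M (e k) j)]
    rw [mulVec, dotProduct]
    exact Finset.sum_congr rfl fun l _ => mul_comm _ _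
  rw [← hcalc]
  exact hM.dotProduct_mulVec_pos hy

lemma posDef_of_psd_det_ne {M : Matrix ι ι ℂ} (hM : M.PosSemidef) (hd : M.det ≠ 0) :
    M.PosDef := by
  refine Matrix.PosDef.of_dotProduct_mulVec_pos hM.1 fun x hx => ?_
  refine lt_of_le_of_ne (hM.dotProduct_mulVec_nonneg x) fun h => ?_
  have h0 : M *ᵥ x = 0 := (hM.dotProduct_mulVec_zero_iff x).mp h.symm
  exact hd (Matrix.exists_mulVec_eq_zero_iff.mp ⟨x, hx, h0⟩)


section Fischer
variable {α β σ : Type*} [Fintype α] [DecidableEq α] [Fintype β] [DecidableEq β]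
  [Fintype σ] [DecidableEq σ]

lemma blocks_decomp (P : Matrix (α ⊕ β) (α ⊕ β) ℂ) (hP : P.IsHermitian) :
    P = fromBlocks (P.submatrix Sum.inl Sum.inl) (P.submatrix Sum.inl Sum.inr)
      (P.submatrix Sum.inl Sum.inr)ᴴ (P.submatrix Sum.inr Sum.inr) := by
  have hC : (P.submatrix Sum.inl Sum.inr)ᴴ = P.submatrix Sum.inr Sum.inl := by
    ext i j
    exact hP.apply (Sum.inr i) (Sum.inl j)
  rw [hC]
  ext i j
  cases i <;> cases j <;> rfl

lemma fischer (P : Matrix (α ⊕ β) (α ⊕ β) ℂ) (hP : P.PosDef) :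
    P.det.re ≤ (P.submatrix Sum.inl Sum.inl).det.re * (P.submatrix Sum.inr Sum.inr).det.re := by
  set A := P.submatrix Sum.inl Sum.inl with hA
  set B := P.submatrix Sum.inl Sum.inr with hB
  set D := P.submatrix Sum.inr Sum.inr with hD
  have hPB : P = fromBlocks A B Bᴴ D := blocks_decomp P hP.1
  have hApd : A.PosDef := posDef_submatrix_inj hP Sum.inl_injective
  have hDpsd : D.PosSemidef := hP.posSemidef.submatrix Sum.inr
  haveI : Invertible A := A.invertibleOfIsUnitDet hApd.det_pos.ne'.isUnit
  set S := D - Bᴴ * A⁻¹ * B with hS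
  have hSpsd : S.PosSemidef := by
    rw [hS]
    exact (Matrix.PosDef.fromBlocks₁₁ B D hApd).mp (hPB ▸ hP.posSemidef)
  have hdet : P.det = A.det * S.det := by
    rw [hPB, Matrix.det_fromBlocks₁₁, Matrix.invOf_eq_nonsing_inv]
  have hX : (Bᴴ * A⁻¹ * B).PosSemidef := hApd.inv.posSemidef.conjTranspose_mul_mul_same B
  have hmono : S.det.re ≤ D.det.re := by
    have := det_mono hSpsd hX
    rwa [sub_add_cancel] at this
  have hA2 := psd_det_real hApd.posSemidef
  have hS2 := psd_det_real hSpsd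
  rw [hdet, hA2.1, hS2.1, ← Complex.ofReal_mul]
  simp only [Complex.ofReal_re]
  have hDre : 0 ≤ D.det.re := psd_det_re_nonneg hDpsd
  nlinarith [hA2.2, hS2.2]

lemma kot_block (N : Matrix (σ ⊕ (α ⊕ β)) (σ ⊕ (α ⊕ β)) ℂ) (hN : N.PosDef) :
    N.det.re * (N.submatrix Sum.inl Sum.inl).det.re ≤
      (N.submatrix (Sum.map id Sum.inl) (Sum.map id Sum.inl)).det.re *
      (N.submatrix (Sum.map id Sum.inr) (Sum.map id Sum.inr)).det.re := by
  set W := N.submatrix Sum.inl Sum.inl with hW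
  set X := N.submatrix Sum.inl Sum.inr with hX
  set Z := N.submatrix Sum.inr Sum.inr with hZ
  have hNB : N = fromBlocks W X Xᴴ Z := blocks_decomp N hN.1
  have hWpd : W.PosDef := posDef_submatrix_inj hN Sum.inl_injective
  haveI : Invertible W := W.invertibleOfIsUnitDet hWpd.det_pos.ne'.isUnit
  set P := Z - Xᴴ * W⁻¹ * X with hP
  have hPpsd : P.PosSemidef := by
    rw [hP]
    exact (Matrix.PosDef.fromBlocks₁₁ X Z hWpd).mp (hNB ▸ hN.posSemidef)
  have hdetN : N.det = W.det * P.det := by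
    rw [hNB, Matrix.det_fromBlocks₁₁, Matrix.invOf_eq_nonsing_inv]
  have hPdet : P.det ≠ 0 := by
    intro h
    have : N.det = 0 := by rw [hdetN, h, mul_zero]
    exact hN.det_pos.ne' this
  have hPpd : P.PosDef := posDef_of_psd_det_ne hPpsd hPdet
  -- identify the two mixed principal minors
  have hsub1 : N.submatrix (Sum.map id Sum.inl) (Sum.map id Sum.inl) =
      fromBlocks W (X.submatrix id Sum.inl) ((X.submatrix id Sum.inl)ᴴ)
        (Z.submatrix Sum.inl Sum.inl) := by
    rw [show (X.submatrix id Sum.inl)ᴴ = Xᴴ.submatrix Sum.inl id from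
      (conjTranspose_submatrix _ _ _).symm, hNB]
    ext i j
    cases i <;> cases j <;> rfl
  have hsub2 : N.submatrix (Sum.map id Sum.inr) (Sum.map id Sum.inr) =
      fromBlocks W (X.submatrix id Sum.inr) ((X.submatrix id Sum.inr)ᴴ)
        (Z.submatrix Sum.inr Sum.inr) := by
    rw [show (X.submatrix id Sum.inr)ᴴ = Xᴴ.submatrix Sum.inr id from
      (conjTranspose_submatrix _ _ _).symm, hNB]
    ext i j
    cases i <;> cases j <;> rfl
  have hP11 : P.submatrix Sum.inl Sum.inl =
      Z.submatrix Sum.inl Sum.inl - (X.submatrix id Sum.inl)ᴴ * W⁻¹ * (X.submatrix id Sum.inl) := by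
    rw [show (X.submatrix id Sum.inl)ᴴ = Xᴴ.submatrix Sum.inl id from
      (conjTranspose_submatrix _ _ _).symm]
    rw [hP]
    ext i j
    simp only [submatrix_apply, Matrix.sub_apply, Matrix.mul_apply, id]
  have hP22 : P.submatrix Sum.inr Sum.inr =
      Z.submatrix Sum.inr Sum.inr - (X.submatrix id Sum.inr)ᴴ * W⁻¹ * (X.submatrix id Sum.inr) := by
    rw [show (X.submatrix id Sum.inr)ᴴ = Xᴴ.submatrix Sum.inr id from
      (conjTranspose_submatrix _ _ _).symm]
    rw [hP]
    ext i j
    simp only [submatrix_apply, Matrix.sub_apply, Matrix.mul_apply, id]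
  have hdet1 : (N.submatrix (Sum.map id Sum.inl) (Sum.map id Sum.inl)).det =
      W.det * (P.submatrix Sum.inl Sum.inl).det := by
    rw [hsub1, Matrix.det_fromBlocks₁₁, Matrix.invOf_eq_nonsing_inv, hP11]
  have hdet2 : (N.submatrix (Sum.map id Sum.inr) (Sum.map id Sum.inr)).det =
      W.det * (P.submatrix Sum.inr Sum.inr).det := by
    rw [hsub2, Matrix.det_fromBlocks₁₁, Matrix.invOf_eq_nonsing_inv, hP22]
  have hfis := fischer P hPpd
  have hw := psd_det_real hWpd.posSemidef
  have hp := psd_det_real hPpsd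
  have hp1 := psd_det_real (hPpsd.submatrix Sum.inl)
  have hp2 := psd_det_real (hPpsd.submatrix Sum.inr)
  rw [hdetN, hdet1, hdet2, hw.1, hp.1, hp1.1, hp2.1, ← Complex.ofReal_mul,
    ← Complex.ofReal_mul, ← Complex.ofReal_mul]
  simp only [Complex.ofReal_re]
  nlinarith [mul_le_mul_of_nonneg_left hfis (mul_nonneg hw.2 hw.2), hw.2, hp.2, hp1.2, hp2.2]

end Fischer


section Kot
variable {ι : Type*} [Fintype ι] [DecidableEq ι]

/-- determinant (real part) of the principal submatrix indexed by a finset -/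
def dre (M : Matrix ι ι ℂ) (S : Finset ι) : ℝ :=
  (M.submatrix (fun x : {a // a ∈ S} => (x : ι)) (fun x : {a // a ∈ S} => (x : ι))).det.re

lemma dre_eq {κ : Type*} [Fintype κ] [DecidableEq κ] (M : Matrix ι ι ℂ) (S : Finset ι)
    (u : κ → ι) (hu : Function.Injective u) (hmem : ∀ x, u x ∈ S)
    (hsurj : ∀ y ∈ S, ∃ x, u x = y) :
    (M.submatrix u u).det.re = dre M S := by
  have hbij : Function.Bijective (fun x : κ => (⟨u x, hmem x⟩ : {a // a ∈ S})) := by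
    constructor
    · intro a b h
      exact hu (congrArg Subtype.val h)
    · rintro ⟨y, hy⟩
      obtain ⟨x, hx⟩ := hsurj y hy
      exact ⟨x, Subtype.ext hx⟩
  set e := Equiv.ofBijective _ hbij
  have heq : M.submatrix u u =
      (M.submatrix (fun x : {a // a ∈ S} => (x : ι)) (fun x : {a // a ∈ S} => (x : ι))).submatrix
        (⇑e) (⇑e) := by
    rw [submatrix_submatrix]
    rfl
  rw [heq, Matrix.det_submatrix_equiv_self]
  rfl

lemma dre_nonneg {M : Matrix ι ι ℂ} (hM : M.PosSemidef) (S : Finset ι) : 0 ≤ dre M S :=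
  psd_det_re_nonneg (hM.submatrix _)

lemma kot_finset_pd (M : Matrix ι ι ℂ) (hM : M.PosDef) (A B : Finset ι) :
    dre M (A ∪ B) * dre M (A ∩ B) ≤ dre M A * dre M B := by
  classical
  set f : ((A ∩ B : Finset ι) ⊕ ((A \ B : Finset ι) ⊕ (B \ A : Finset ι))) → ι :=
    Sum.elim (fun x => (x : ι)) (Sum.elim (fun x => (x : ι)) (fun x => (x : ι))) with hf
  have hfinj : Function.Injective f := by
    rintro (x | x | x) (y | y | y) h <;> simp only [hf, Sum.elim_inl, Sum.elim_inr] at h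
    · exact congrArg Sum.inl (Subtype.ext h)
    · exfalso; have hx := x.2; have hy := y.2
      rw [Finset.mem_inter] at hx; rw [Finset.mem_sdiff] at hy
      exact hy.2 (h ▸ hx.2)
    · exfalso; have hx := x.2; have hy := y.2
      rw [Finset.mem_inter] at hx; rw [Finset.mem_sdiff] at hy
      exact hy.2 (h ▸ hx.1)
    · exfalso; have hx := x.2; have hy := y.2
      rw [Finset.mem_inter] at hy; rw [Finset.mem_sdiff] at hx
      exact hx.2 (h ▸ hy.2)
    · exact congrArg Sum.inr (congrArg Sum.inl (Subtype.ext h))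
    · exfalso; have hx := x.2; have hy := y.2
      rw [Finset.mem_sdiff] at hx hy
      exact hy.2 (h ▸ hx.1)
    · exfalso; have hx := x.2; have hy := y.2
      rw [Finset.mem_inter] at hy; rw [Finset.mem_sdiff] at hx
      exact hx.2 (h ▸ hy.1)
    · exfalso; have hx := x.2; have hy := y.2
      rw [Finset.mem_sdiff] at hx hy
      exact hx.2 (h ▸ hy.1)
    · exact congrArg Sum.inr (congrArg Sum.inr (Subtype.ext h))
  set N := M.submatrix f f with hN
  have hNpd : N.PosDef := posDef_submatrix_inj hM hfinj
  have h1 : N.det.re = dre M (A ∪ B) := by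
    refine dre_eq M (A ∪ B) f hfinj ?_ ?_
    · rintro (x | x | x)
      · have := x.2; rw [Finset.mem_inter] at this
        exact Finset.mem_union_left _ this.1
      · have := x.2; rw [Finset.mem_sdiff] at this
        exact Finset.mem_union_left _ this.1
      · have := x.2; rw [Finset.mem_sdiff] at this
        exact Finset.mem_union_right _ this.1
    · intro y hy
      rw [Finset.mem_union] at hy
      by_cases hA : y ∈ A
      · by_cases hB : y ∈ B
        · exact ⟨Sum.inl ⟨y, Finset.mem_inter.mpr ⟨hA, hB⟩⟩, rfl⟩
        · exact ⟨Sum.inr (Sum.inl ⟨y, Finset.mem_sdiff.mpr ⟨hA, hB⟩⟩), rfl⟩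
      · have hB : y ∈ B := hy.resolve_left hA
        exact ⟨Sum.inr (Sum.inr ⟨y, Finset.mem_sdiff.mpr ⟨hB, hA⟩⟩), rfl⟩
  have h2 : (N.submatrix Sum.inl Sum.inl).det.re = dre M (A ∩ B) := by
    rw [hN, submatrix_submatrix]
    exact dre_eq M (A ∩ B) _ (fun a b h => Subtype.ext h) (fun x => x.2)
      (fun y hy => ⟨⟨y, hy⟩, rfl⟩)
  have h3 : (N.submatrix (Sum.map id Sum.inl) (Sum.map id Sum.inl)).det.re = dre M A := by
    rw [hN, submatrix_submatrix]
    have hcomp : f ∘ Sum.map id Sum.inl =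
        Sum.elim (fun x : (A ∩ B : Finset ι) => (x : ι)) (fun x : (A \ B : Finset ι) => (x : ι)) := by
      funext z; cases z <;> rfl
    rw [hcomp]
    refine dre_eq M A _ ?_ ?_ ?_
    · have := hfinj
      rintro (x | x) (y | y) h <;> simp only [Sum.elim_inl, Sum.elim_inr] at h
      · exact congrArg Sum.inl (Subtype.ext h)
      · exfalso; have hx := x.2; have hy := y.2
        rw [Finset.mem_inter] at hx; rw [Finset.mem_sdiff] at hy
        exact hy.2 (h ▸ hx.2)
      · exfalso; have hx := x.2; have hy := y.2
        rw [Finset.mem_inter] at hy; rw [Finset.mem_sdiff] at hx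
        exact hx.2 (h ▸ hy.2)
      · exact congrArg Sum.inr (Subtype.ext h)
    · rintro (x | x)
      · have := x.2; rw [Finset.mem_inter] at this; exact this.1
      · have := x.2; rw [Finset.mem_sdiff] at this; exact this.1
    · intro y hy
      by_cases hB : y ∈ B
      · exact ⟨Sum.inl ⟨y, Finset.mem_inter.mpr ⟨hy, hB⟩⟩, rfl⟩
      · exact ⟨Sum.inr ⟨y, Finset.mem_sdiff.mpr ⟨hy, hB⟩⟩, rfl⟩
  have h4 : (N.submatrix (Sum.map id Sum.inr) (Sum.map id Sum.inr)).det.re = dre M B := by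
    rw [hN, submatrix_submatrix]
    have hcomp : f ∘ Sum.map id Sum.inr =
        Sum.elim (fun x : (A ∩ B : Finset ι) => (x : ι)) (fun x : (B \ A : Finset ι) => (x : ι)) := by
      funext z; cases z <;> rfl
    rw [hcomp]
    refine dre_eq M B _ ?_ ?_ ?_
    · rintro (x | x) (y | y) h <;> simp only [Sum.elim_inl, Sum.elim_inr] at h
      · exact congrArg Sum.inl (Subtype.ext h)
      · exfalso; have hx := x.2; have hy := y.2
        rw [Finset.mem_inter] at hx; rw [Finset.mem_sdiff] at hy
        exact hy.2 (h ▸ hx.1)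
      · exfalso; have hx := x.2; have hy := y.2
        rw [Finset.mem_inter] at hy; rw [Finset.mem_sdiff] at hx
        exact hx.2 (h ▸ hy.1)
      · exact congrArg Sum.inr (Subtype.ext h)
    · rintro (x | x)
      · have := x.2; rw [Finset.mem_inter] at this; exact this.2
      · have := x.2; rw [Finset.mem_sdiff] at this; exact this.1
    · intro y hy
      by_cases hA : y ∈ A
      · exact ⟨Sum.inl ⟨y, Finset.mem_inter.mpr ⟨hA, hy⟩⟩, rfl⟩
      · exact ⟨Sum.inr ⟨y, Finset.mem_sdiff.mpr ⟨hy, hA⟩⟩, rfl⟩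
  have := kot_block N hNpd
  rwa [h1, h2, h3, h4] at this

lemma kot_finset (M : Matrix ι ι ℂ) (hM : M.PosSemidef) (A B : Finset ι) :
    dre M (A ∪ B) * dre M (A ∩ B) ≤ dre M A * dre M B := by
  classical
  have key : ∀ ε : ℝ, 0 < ε →
      dre (M + (ε : ℂ) • 1) (A ∪ B) * dre (M + (ε : ℂ) • 1) (A ∩ B) ≤
        dre (M + (ε : ℂ) • 1) A * dre (M + (ε : ℂ) • 1) B := by
    intro ε hε
    refine kot_finset_pd _ ?_ A B
    refine Matrix.PosDef.posSemidef_add hM ?_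
    rw [Matrix.smul_one_eq_diagonal]
    exact Matrix.PosDef.diagonal fun _ => Complex.zero_lt_real.mpr hε
  have hconts : ∀ S : Finset ι, Continuous fun t : ℝ => dre (M + (t : ℂ) • 1) S := by
    intro S
    have h1 : Continuous fun t : ℝ => (M + (t : ℂ) • (1 : Matrix ι ι ℂ)) := by
      refine continuous_const.add ?_
      exact (Complex.continuous_ofReal).smul continuous_const
    have h2 : Continuous fun t : ℝ =>
        ((M + (t : ℂ) • (1 : Matrix ι ι ℂ)).submatrix
          (fun x : {a // a ∈ S} => (x : ι)) (fun x : {a // a ∈ S} => (x : ι))) :=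
      h1.matrix_submatrix _ _
    exact Complex.continuous_re.comp h2.matrix_det
  have hne : (nhdsWithin (0:ℝ) (Set.Ioi 0)).NeBot := nhdsGT_neBot 0
  have hlim : ∀ S : Finset ι,
      Filter.Tendsto (fun t : ℝ => dre (M + (t : ℂ) • 1) S)
        (nhdsWithin 0 (Set.Ioi 0)) (nhds (dre M S)) := by
    intro S
    have := ((hconts S).tendsto 0).mono_left (nhdsWithin_le_nhds (s := Set.Ioi (0:ℝ)))
    simpa using this
  refine le_of_tendsto_of_tendsto (((hlim (A ∪ B)).mul (hlim (A ∩ B))))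
    (((hlim A).mul (hlim B))) ?_
  exact eventually_mem_nhdsWithin.mono fun t ht => key t ht

end Kot


section Chain
variable {γ ι' : Type*} [DecidableEq γ] [DecidableEq ι']

lemma chain_lemma (D : Finset γ → ℝ) (h0 : ∀ F, 0 ≤ D F)
    (hK : ∀ F G, D (F ∪ G) * D (F ∩ G) ≤ D F * D G)
    (G : Finset γ) (F : ι' → Finset γ) (hGF : ∀ p, G ⊆ F p)
    (hFF : ∀ p q, p ≠ q → F p ∩ F q ⊆ G) (s : Finset ι') :
    D (G ∪ s.biUnion F) * D G ^ s.card ≤ D G * ∏ p ∈ s, D (F p) := by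
  classical
  induction s using Finset.cons_induction with
  | empty => simp
  | cons a t ha ih =>
    set A := G ∪ t.biUnion F with hA
    have hAF : A ∩ F a = G := by
      apply Finset.Subset.antisymm
      · intro x hx
        rw [Finset.mem_inter, hA, Finset.mem_union, Finset.mem_biUnion] at hx
        rcases hx with ⟨hx1 | ⟨p, hp, hxp⟩, hx2⟩
        · exact hx1
        · have hpa : p ≠ a := fun h => ha (h ▸ hp)
          exact hFF p a hpa (Finset.mem_inter.mpr ⟨hxp, hx2⟩)
      · intro x hx
        exact Finset.mem_inter.mpr ⟨Finset.mem_union_left _ hx, hGF a hx⟩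
    have hAU : A ∪ F a = G ∪ (Finset.cons a t ha).biUnion F := by
      rw [Finset.cons_eq_insert, Finset.biUnion_insert, hA]
      ext x
      simp only [Finset.mem_union]
      tauto
    have hk := hK A (F a)
    rw [hAF, hAU] at hk
    rw [Finset.card_cons, Finset.prod_cons, pow_succ]
    calc D (G ∪ (Finset.cons a t ha).biUnion F) * (D G ^ t.card * D G)
        = (D (G ∪ (Finset.cons a t ha).biUnion F) * D G) * D G ^ t.card := by ring
      _ ≤ (D A * D (F a)) * D G ^ t.card := by
          exact mul_le_mul_of_nonneg_right hk (pow_nonneg (h0 G) _)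
      _ = D (F a) * (D A * D G ^ t.card) := by ring
      _ ≤ D (F a) * (D G * ∏ p ∈ t, D (F p)) := by
          exact mul_le_mul_of_nonneg_left ih (h0 (F a))
      _ = D G * (D (F a) * ∏ p ∈ t, D (F p)) := by ring

end Chain

section FreeGroupStuff
variable {r : ℕ}

/-- a single letter as a group element -/
def lett (p : Fin r × Bool) : FG r := FreeGroup.mk [p]

lemma lett_inv (p : Fin r × Bool) : (lett p)⁻¹ = lett (p.1, !p.2) := by
  rw [lett, FreeGroup.inv_mk]
  rfl

lemma lett_of (i : Fin r) : lett (i, true) = FreeGroup.of i := rfl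

lemma toWord_lett_mul (p : Fin r × Bool) (x : FG r) :
    (lett p * x).toWord =
      if x.toWord.head? = some (p.1, !p.2) then x.toWord.tail else p :: x.toWord := by
  classical
  cases h : x.toWord with
  | nil =>
    have hx1 : x = 1 := FreeGroup.toWord_eq_nil_iff.mp h
    rw [if_neg (by simp)]
    rw [hx1, mul_one, lett, FreeGroup.toWord_mk, FreeGroup.reduce_singleton]
  | cons hd tl =>
    have hx : lett p * x = FreeGroup.mk (p :: hd :: tl) := by
      rw [← FreeGroup.mk_toWord (x := x), h, lett, FreeGroup.mul_mk]
      rfl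
    have hred2 : FreeGroup.reduce (hd :: tl) = hd :: tl := by
      rw [← h, FreeGroup.reduce_toWord]
    have hstep : FreeGroup.reduce (p :: hd :: tl) =
        if p.1 = hd.1 ∧ p.2 = !hd.2 then tl else p :: hd :: tl := by
      rw [FreeGroup.reduce.cons, hred2]
    have hiff : ((hd :: tl).head? = some (p.1, !p.2)) ↔ (p.1 = hd.1 ∧ p.2 = !hd.2) := by
      rw [List.head?_cons]
      rcases p with ⟨pi, pb⟩
      rcases hd with ⟨hi, hb⟩
      simp only [Option.some.injEq, Prod.ext_iff]
      cases pb <;> cases hb <;> simp [eq_comm]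
    rw [hx, FreeGroup.toWord_mk, hstep]
    by_cases hc : p.1 = hd.1 ∧ p.2 = !hd.2
    · rw [if_pos hc, if_pos (hiff.mpr hc), List.tail_cons]
    · rw [if_neg hc, if_neg (fun hh => hc (hiff.mp hh))]

lemma wlen_lett_le (p : Fin r × Bool) (x : FG r) :
    wlen (lett p * x) ≤ wlen x + 1 := by
  simp only [wlen]
  rw [toWord_lett_mul]
  split_ifs
  · rw [List.length_tail]
    omega
  · simp

lemma wlen_le_lett (p : Fin r × Bool) (x : FG r) :
    wlen x ≤ wlen (lett p * x) + 1 := by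
  simp only [wlen]
  rw [toWord_lett_mul]
  split_ifs with hc
  · cases hx : x.toWord with
    | nil => rw [hx] at hc; simp at hc
    | cons hd tl => simp
  · simp only [List.length_cons]
    omega

lemma head_of_cancel {p : Fin r × Bool} {x : FG r} (h : wlen (lett p * x) < wlen x) :
    x.toWord.head? = some (p.1, !p.2) := by
  by_contra hc
  simp only [wlen] at h
  rw [toWord_lett_mul, if_neg hc] at h
  simp only [List.length_cons] at h
  omega

lemma wlen_inter {p q : Fin r × Bool} {x : FG r} {n : ℕ} (hpq : p ≠ q)
    (hp : wlen (lett p * x) ≤ n) (hq : wlen (lett q * x) ≤ n) : wlen x ≤ n := by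
  by_contra hcon
  push_neg at hcon
  have hplt : wlen (lett p * x) < wlen x := by omega
  have hqlt : wlen (lett q * x) < wlen x := by omega
  have hh1 := head_of_cancel hplt
  have hh2 := head_of_cancel hqlt
  apply hpq
  rw [hh1] at hh2
  have h2 := Option.some.inj hh2
  rcases p with ⟨pi, pb⟩
  rcases q with ⟨qi, qb⟩
  simp only [Prod.mk.injEq] at h2 ⊢
  exact ⟨h2.1, Bool.not_inj h2.2⟩

lemma wlen_cover {x : FG r} {n : ℕ} (h : wlen x ≤ n + 1) :
    wlen x ≤ n ∨ ∃ p, wlen (lett p * x) ≤ n := by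
  by_cases hn : wlen x ≤ n
  · exact Or.inl hn
  · right
    push_neg at hn
    have hxn : wlen x = n + 1 := by omega
    cases hx : x.toWord with
    | nil =>
      exfalso
      rw [wlen, hx] at hxn
      simp at hxn
    | cons hd tl =>
      refine ⟨(hd.1, !hd.2), ?_⟩
      simp only [wlen]
      rw [toWord_lett_mul, if_pos]
      · rw [hx, List.tail_cons]
        rw [wlen, hx] at hxn
        simp only [List.length_cons] at hxn
        omega
      · rw [hx, List.head?_cons]
        simp

end FreeGroupStuff

section PhiLevel
variable {r k : ℕ}

def Dphi (φ : FG r → Matrix (Fin k) (Fin k) ℂ) (F : Finset (FG r)) : ℝ :=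
  (phiMat φ F).det.re

lemma Dphi_nonneg (φ : FG r → Matrix (Fin k) (Fin k) ℂ) (hφ : IsPosDefFn φ)
    (F : Finset (FG r)) : 0 ≤ Dphi φ F :=
  psd_det_re_nonneg (hφ F)

lemma Dphi_image (φ : FG r → Matrix (Fin k) (Fin k) ℂ) (a : FG r) (F : Finset (FG r)) :
    Dphi φ (F.image (fun x => a * x)) = Dphi φ F := by
  classical
  have hbij : Function.Bijective
      (fun x : {y // y ∈ F} => (⟨a * x.1, Finset.mem_image_of_mem _ x.2⟩ :
        {y // y ∈ F.image (fun x => a * x)})) := by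
    constructor
    · intro x y h
      have := congrArg Subtype.val h
      exact Subtype.ext (mul_left_cancel this)
    · rintro ⟨y, hy⟩
      rw [Finset.mem_image] at hy
      obtain ⟨x, hx, rfl⟩ := hy
      exact ⟨⟨x, hx⟩, rfl⟩
  set e := Equiv.ofBijective _ hbij with he
  have heq : phiMat φ F =
      (phiMat φ (F.image (fun x => a * x))).submatrix
        (⇑(e.prodCongr (Equiv.refl (Fin k)))) (⇑(e.prodCongr (Equiv.refl (Fin k)))) := by
    ext ⟨x, c⟩ ⟨y, d⟩
    simp only [phiMat, submatrix_apply, Matrix.of_apply, Equiv.prodCongr_apply, Equiv.coe_refl,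
      Prod.map]
    have harg : ((e x : FG r))⁻¹ * (e y : FG r) = (x : FG r)⁻¹ * (y : FG r) := by
      show (a * (x : FG r))⁻¹ * (a * (y : FG r)) = _
      group
    rw [harg]
    rfl
  rw [Dphi, Dphi, heq, Matrix.det_submatrix_equiv_self]

lemma kotD (φ : FG r → Matrix (Fin k) (Fin k) ℂ) (hφ : IsPosDefFn φ) (F G : Finset (FG r)) :
    Dphi φ (F ∪ G) * Dphi φ (F ∩ G) ≤ Dphi φ F * Dphi φ G := by
  classical
  set U := F ∪ G with hU
  set M := phiMat φ U with hM
  set S : Finset (FG r) → Finset ({y // y ∈ U} × Fin k) :=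
    fun H => Finset.univ.filter (fun p => p.1.1 ∈ H) with hS
  have key : ∀ H : Finset (FG r), H ⊆ U → Dphi φ H = dre M (S H) := by
    intro H hHU
    have hmm : phiMat φ H = M.submatrix
        (fun q : {y // y ∈ H} × Fin k => ((⟨q.1.1, hHU q.1.2⟩ : {y // y ∈ U}), q.2))
        (fun q : {y // y ∈ H} × Fin k => ((⟨q.1.1, hHU q.1.2⟩ : {y // y ∈ U}), q.2)) := by
      ext ⟨x, c⟩ ⟨y, d⟩
      rfl
    rw [Dphi, hmm]
    refine dre_eq M (S H) _ ?_ ?_ ?_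
    · rintro ⟨⟨x, hx⟩, c⟩ ⟨⟨y, hy⟩, d⟩ h
      simp only [Prod.ext_iff, Subtype.ext_iff] at h ⊢
      exact h
    · rintro ⟨⟨x, hx⟩, c⟩
      simp only [hS, Finset.mem_filter]
      exact ⟨Finset.mem_univ _, hx⟩
    · rintro ⟨⟨y, hy⟩, c⟩ hmem
      simp only [hS, Finset.mem_filter] at hmem
      exact ⟨(⟨y, hmem.2⟩, c), rfl⟩
  have hSU : S F ∪ S G = S (F ∪ G) := by
    ext p
    simp only [hS, Finset.mem_union, Finset.mem_filter, Finset.mem_univ, true_and]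
  have hSI : S F ∩ S G = S (F ∩ G) := by
    ext p
    simp only [hS, Finset.mem_inter, Finset.mem_filter, Finset.mem_univ, true_and]
  have hkot := kot_finset M (hφ U) (S F) (S G)
  rw [hSU, hSI] at hkot
  rw [key F Finset.subset_union_left, key G Finset.subset_union_right,
    key (F ∪ G) (by rw [hU]), key (F ∩ G)
      (Finset.Subset.trans Finset.inter_subset_left Finset.subset_union_left)]
  exact hkot

end PhiLevel

section SetLemmas
variable {r : ℕ}

lemma mem_ballF {g : FG r} {m : ℕ} : g ∈ ballF r m ↔ wlen g ≤ m := by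
  simp [ballF, Set.Finite.mem_toFinset]

lemma mem_image_lett {p : Fin r × Bool} {y : FG r} {m : ℕ} :
    y ∈ (ballF r m).image (fun x => lett p * x) ↔ wlen (lett (p.1, !p.2) * y) ≤ m := by
  rw [Finset.mem_image]
  constructor
  · rintro ⟨x, hx, rfl⟩
    have : lett (p.1, !p.2) * (lett p * x) = x := by
      rw [← lett_inv, inv_mul_cancel_left]
    rw [this]
    exact mem_ballF.mp hx
  · intro h
    refine ⟨lett (p.1, !p.2) * y, mem_ballF.mpr h, ?_⟩
    rw [← lett_inv, mul_inv_cancel_left]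

def FpSet (r n : ℕ) (p : Fin r × Bool) : Finset (FG r) :=
  ballF r n ∪ (ballF r n).image (fun x => lett p * x)

lemma bar_ne {p q : Fin r × Bool} (h : p ≠ q) : (p.1, !p.2) ≠ (q.1, !q.2) := by
  intro hcon
  apply h
  rcases p with ⟨pi, pb⟩
  rcases q with ⟨qi, qb⟩
  simp only [Prod.mk.injEq] at hcon ⊢
  exact ⟨hcon.1, Bool.not_inj hcon.2⟩

lemma FpSet_inter {p q : Fin r × Bool} (hpq : p ≠ q) (n : ℕ) :
    FpSet r n p ∩ FpSet r n q ⊆ ballF r n := by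
  intro x hx
  rw [Finset.mem_inter, FpSet, FpSet, Finset.mem_union, Finset.mem_union] at hx
  rcases hx with ⟨h1 | h1, h2 | h2⟩
  · exact h1
  · exact h1
  · exact h2
  · rw [mem_image_lett] at h1 h2
    exact mem_ballF.mpr (wlen_inter (bar_ne hpq) h1 h2)

lemma FpSet_cover (n : ℕ) :
    ballF r n ∪ Finset.univ.biUnion (FpSet r n) = ballF r (n + 1) := by
  ext x
  rw [Finset.mem_union, Finset.mem_biUnion]
  constructor
  · rintro (h | ⟨p, _, hp⟩)
    · exact mem_ballF.mpr (le_trans (mem_ballF.mp h) (Nat.le_succ n))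
    · rw [FpSet, Finset.mem_union] at hp
      rcases hp with h | h
      · exact mem_ballF.mpr (le_trans (mem_ballF.mp h) (Nat.le_succ n))
      · rw [mem_image_lett] at h
        have := wlen_le_lett (p.1, !p.2) x
        exact mem_ballF.mpr (by omega)
  · intro h
    rcases wlen_cover (mem_ballF.mp h) with h1 | ⟨p, hp⟩
    · exact Or.inl (mem_ballF.mpr h1)
    · right
      refine ⟨(p.1, !p.2), Finset.mem_univ _, ?_⟩
      rw [FpSet, Finset.mem_union, mem_image_lett]
      right
      have hpp : ((p.1, !p.2).1, !(p.1, !p.2).2) = p := by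
        rcases p with ⟨pi, pb⟩
        simp
      rw [hpp]
      exact hp

end SetLemmas

theorem statement15 (r k : ℕ) (hr : 1 ≤ r) (hk : 1 ≤ k)
    (φ : FG r → Matrix (Fin k) (Fin k) ℂ) (hφ : IsPosDefFn φ) (n : ℕ) :
    (∏ i : Fin r,
        ((phiMat φ (ballInter r (n + 1) i)).det.re * (phiMat φ (ballUnion r (n + 1) i)).det.re)
      ≤ (phiMat φ (ballF r (n + 1))).det.re ^ (2 * r)) ∧
    ((phiMat φ (ballF r (n + 1))).det.re * (phiMat φ (ballF r n)).det.re ^ (2 * r - 1)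
      ≤ ∏ i : Fin r, (phiMat φ (ballUnion r n i)).det.re ^ 2) := by
  constructor
  · -- part (i)
    have hstep : ∀ i : Fin r,
        (phiMat φ (ballInter r (n + 1) i)).det.re * (phiMat φ (ballUnion r (n + 1) i)).det.re
          ≤ (phiMat φ (ballF r (n + 1))).det.re ^ 2 := by
      intro i
      have hkot := kotD φ hφ (ballF r (n + 1))
        ((ballF r (n + 1)).image (fun x => FreeGroup.of i * x))
      have himg := Dphi_image φ (FreeGroup.of i) (ballF r (n + 1))
      rw [himg] at hkot
      show Dphi φ (ballInter r (n + 1) i) * Dphi φ (ballUnion r (n + 1) i)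
          ≤ Dphi φ (ballF r (n + 1)) ^ 2
      have hbu : ballUnion r (n + 1) i =
          ballF r (n + 1) ∪ (ballF r (n + 1)).image (fun x => FreeGroup.of i * x) := rfl
      have hbi : ballInter r (n + 1) i =
          ballF r (n + 1) ∩ (ballF r (n + 1)).image (fun x => FreeGroup.of i * x) := rfl
      rw [hbu, hbi, mul_comm, pow_two]
      exact hkot
    calc ∏ i : Fin r,
        ((phiMat φ (ballInter r (n + 1) i)).det.re * (phiMat φ (ballUnion r (n + 1) i)).det.re)
        ≤ ∏ _i : Fin r, (phiMat φ (ballF r (n + 1))).det.re ^ 2 := by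
          refine Finset.prod_le_prod (fun i _ => ?_) (fun i _ => hstep i)
          exact mul_nonneg (Dphi_nonneg φ hφ _) (Dphi_nonneg φ hφ _)
      _ = ((phiMat φ (ballF r (n + 1))).det.re ^ 2) ^ r := by
          rw [Finset.prod_const, Finset.card_univ, Fintype.card_fin]
      _ = (phiMat φ (ballF r (n + 1))).det.re ^ (2 * r) := by rw [← pow_mul]
  · -- part (ii)
    have hchain := chain_lemma (Dphi φ) (Dphi_nonneg φ hφ) (kotD φ hφ) (ballF r n)
      (FpSet r n) (fun p => Finset.subset_union_left) (fun p q h => FpSet_inter h n)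
      Finset.univ
    rw [FpSet_cover n] at hchain
    have hcard : (Finset.univ : Finset (Fin r × Bool)).card = 2 * r := by
      rw [Finset.card_univ, Fintype.card_prod, Fintype.card_fin, Fintype.card_bool]
      omega
    rw [hcard] at hchain
    have hprod : ∏ p : Fin r × Bool, Dphi φ (FpSet r n p)
        = ∏ i : Fin r, Dphi φ (ballUnion r n i) ^ 2 := by
      rw [Fintype.prod_prod_type]
      refine Finset.prod_congr rfl fun i _ => ?_
      rw [Fintype.prod_bool]
      have htrue : FpSet r n (i, true) = ballUnion r n i := rfl
      have hfalse : Dphi φ (FpSet r n (i, false)) = Dphi φ (ballUnion r n i) := by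
        have himg := Dphi_image φ (FreeGroup.of i) (FpSet r n (i, false))
        have h1 : (lett ((i : Fin r), false))⁻¹ = lett (i, true) := by rw [lett_inv]; rfl
        have himset : (FpSet r n (i, false)).image (fun x => FreeGroup.of i * x)
            = ballUnion r n i := by
          rw [FpSet, Finset.image_union, Finset.image_image]
          have hcomp : ((fun x => FreeGroup.of i * x) ∘ (fun x => lett (i, false) * x))
              = (id : FG r → FG r) := by
            funext x
            simp only [Function.comp_apply, id]
            rw [← lett_of i, ← h1, inv_mul_cancel_left]
          rw [hcomp, Finset.image_id, ballUnion, Finset.union_comm]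
        rw [himset] at himg
        exact himg.symm
      rw [htrue, hfalse, pow_two]
    rw [hprod] at hchain
    by_cases hz : Dphi φ (ballF r n) = 0
    · show Dphi φ (ballF r (n + 1)) * Dphi φ (ballF r n) ^ (2 * r - 1)
          ≤ ∏ i : Fin r, Dphi φ (ballUnion r n i) ^ 2
      rw [hz, zero_pow (by omega : 2 * r - 1 ≠ 0), mul_zero]
      exact Finset.prod_nonneg fun i _ => sq_nonneg _
    · have hzpos : 0 < Dphi φ (ballF r n) :=
        lt_of_le_of_ne (Dphi_nonneg φ hφ _) (Ne.symm hz)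
      have h2r : 2 * r = (2 * r - 1) + 1 := by omega
      rw [h2r, pow_succ] at hchain
      show Dphi φ (ballF r (n + 1)) * Dphi φ (ballF r n) ^ (2 * r - 1)
          ≤ ∏ i : Fin r, Dphi φ (ballUnion r n i) ^ 2
      have h3 : (Dphi φ (ballF r (n + 1)) * Dphi φ (ballF r n) ^ (2 * r - 1))
            * Dphi φ (ballF r n)
          ≤ (∏ i : Fin r, Dphi φ (ballUnion r n i) ^ 2) * Dphi φ (ballF r n) := by
        calc (Dphi φ (ballF r (n + 1)) * Dphi φ (ballF r n) ^ (2 * r - 1))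
              * Dphi φ (ballF r n)
            = Dphi φ (ballF r (n + 1))
              * (Dphi φ (ballF r n) ^ (2 * r - 1) * Dphi φ (ballF r n)) := by ring
          _ ≤ Dphi φ (ballF r n) * ∏ i : Fin r, Dphi φ (ballUnion r n i) ^ 2 := hchain
          _ = (∏ i : Fin r, Dphi φ (ballUnion r n i) ^ 2) * Dphi φ (ballF r n) := by ring
      exact le_of_mul_le_mul_right h3 hzpos

end Annealed
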